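/- For every n ∈ ℕ₀ and every k = (k_1,...,k_s) with 1 ≤ k_i ≤ m: H_s(n) ∈ P_k if and only if n ≡ ỹ_m + A_k (mod B_{τ·k}). -/

import Mathlib

open Finset

open scoped Classical

/-- The radical inverse function in base `b`: `φ_b(n) = Σ_j n_j b^{-j-1}`. -/
noncomputable def radInv (b n : ℕ) : ℝ :=
  ∑' j : ℕ, ((n / b ^ j % b : ℕ) : ℝ) / (b : ℝ) ^ (j + 1)

/-- The axis-parallel box `[0, y) = ∏_i [0, y_i)`. -/
def box {s : ℕ} (y : Fin s → ℝ) : Set (Fin s → ℝ) :=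
  Set.univ.pi fun i => Set.Ico 0 (y i)

/-- The discrepancy function `Δ(y, (x_n)_{n=a}^{a+N-1})`. -/
noncomputable def disc {s : ℕ} (x : ℕ → Fin s → ℝ) (a N : ℕ) (y : Fin s → ℝ) : ℝ :=
  ∑ n ∈ Finset.Ico a (a + N),
    ((box y).indicator (fun _ => (1 : ℝ)) (x n) - ∏ i, y i)

/-- The star discrepancy of `(x_n)_{n=a}^{a+N-1}`. -/
noncomputable def Dstar {s : ℕ} (x : ℕ → Fin s → ℝ) (a N : ℕ) : ℝ :=
  sSup {v : ℝ | ∃ y : Fin s → ℝ, (∀ i, y i ∈ Set.Ico (0 : ℝ) 1) ∧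
    v = |disc x a N y| / (N : ℝ)}

/-- `(x_n)_{0 ≤ n < b^m}` is a `(t,m,s)`-net in base `b`. -/
def IsNet {s : ℕ} (b t m : ℕ) (x : ℕ → Fin s → ℝ) : Prop :=
  (∀ n < b ^ m, ∀ i, x n i ∈ Set.Ico (0 : ℝ) 1) ∧
  ∀ d a : Fin s → ℕ, (∀ i, a i < b ^ d i) → (∑ i, d i) + t = m →
    ((Finset.range (b ^ m)).filter
      (fun n => ∀ i, x n i ∈ Set.Ico ((a i : ℝ) / b ^ d i) ((a i + 1 : ℝ) / b ^ d i))).card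
      = b ^ t

/-- The `j`-th `b`-adic digit (`j ≥ 1`) of a real number `x ∈ [0,1)`. -/
noncomputable def bdigit (b : ℕ) (x : ℝ) (j : ℕ) : ℕ := (⌊x * (b : ℝ) ^ j⌋ % (b : ℤ)).toNat % b

/-- The `b`-adic absolute valuation `‖x‖_b = b^{-(k+1)}` where the digits
`x_1, …, x_k` vanish and `x_{k+1} ≠ 0`; it is `0` when all digits vanish. -/
noncomputable def bval (b : ℕ) (x : ℝ) : ℝ :=
  if h : ∃ j, 1 ≤ j ∧ bdigit b x j ≠ 0 then
    (1 : ℝ) / (b : ℝ) ^ sInf {j | 1 ≤ j ∧ bdigit b x j ≠ 0}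
  else 0

/-- The `b`-adic absolute valuation of a vector, `‖x‖_b = ∏_j ‖x^{(j)}‖_b`. -/
noncomputable def bvalVec {s : ℕ} (b : ℕ) (x : Fin s → ℝ) : ℝ := ∏ i, bval b (x i)

/-- Digitwise subtraction modulo `b`: `x ⊖ σ`. -/
noncomputable def bsub (b : ℕ) (x σ : ℝ) : ℝ :=
  ∑' j : ℕ, (((bdigit b x (j + 1) + b - bdigit b σ (j + 1)) % b : ℕ) : ℝ) / (b : ℝ) ^ (j + 1)

/-- Digitwise addition modulo `b`: `x ⊕ σ`. -/
noncomputable def badd (b : ℕ) (x σ : ℝ) : ℝ :=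
  ∑' j : ℕ, (((bdigit b x (j + 1) + bdigit b σ (j + 1)) % b : ℕ) : ℝ) / (b : ℝ) ^ (j + 1)

/-- A `b^m`-point set in `[0,1)^s` is `d`-admissible in base `b`. -/
def IsAdmissible {s : ℕ} (b m : ℕ) (d : ℤ) (x : ℕ → Fin s → ℝ) : Prop :=
  ∀ k n : ℕ, k < n → n < b ^ m →
    bvalVec b (fun i => bsub b (x n i) (x k i)) > (b : ℝ) ^ (-((m : ℤ) + d))

/-- The two-dimensional Halton sequence in bases `2` and `3`. -/
noncomputable def H23 : ℕ → Fin 2 → ℝ := fun n => ![radInv 2 n, radInv 3 n]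

/-- `ytil` is the quantity `ỹ_m` for the Halton sequence in bases `2` and `3`
(so that `τ₁ = 2`, `τ₂ = 1`). -/
def IsYtilde (m ytil : ℕ) : Prop :=
  ytil < 2 ^ (2 * (m + 1)) * 3 ^ (m + 1) ∧
  ∃ M₁ M₂ : ℤ,
    M₁ * 3 ^ (m + 1) ≡ 1 [ZMOD (2 : ℤ) ^ (2 * (m + 1))] ∧
    M₂ * 2 ^ (2 * (m + 1)) ≡ 1 [ZMOD (3 : ℤ) ^ (m + 1)] ∧
    (ytil : ℤ) ≡ M₁ * 3 ^ (m + 1) * (∑ j ∈ Finset.Icc 1 (m + 1), (2 : ℤ) ^ (2 * j - 1))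
        + M₂ * 2 ^ (2 * (m + 1)) * (∑ j ∈ Finset.Icc 1 (m + 1), (3 : ℤ) ^ (j - 1))
      [ZMOD (2 : ℤ) ^ (2 * (m + 1)) * 3 ^ (m + 1)]

/-- Reversal of the first `T` base-`b` digits. -/
def rev (b T x : ℕ) : ℕ := ∑ j ∈ Finset.range T, (x / b ^ j % b) * b ^ (T - 1 - j)

lemma geomNat_mul {b : ℕ} (hb : 2 ≤ b) (T : ℕ) : (b - 1) * ∑ e ∈ range T, b ^ e = b ^ T - 1 := by
  induction T with
  | zero => simp
  | succ T ih =>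
    rw [Finset.sum_range_succ, Nat.mul_add, ih, pow_succ]
    have h1 : 1 ≤ b ^ T := Nat.one_le_pow _ _ (by omega)
    have h2 : b ^ T ≤ b ^ T * b := Nat.le_mul_of_pos_right _ (by omega)
    rw [Nat.sub_one_mul]
    have h3 : b * b ^ T = b ^ T * b := mul_comm _ _
    omega

lemma geomNat_lt {b : ℕ} (hb : 2 ≤ b) (T : ℕ) : ∑ e ∈ range T, b ^ e < b ^ T := by
  have h0 := geomNat_mul hb T
  have h1 : 1 ≤ b ^ T := Nat.one_le_pow _ _ (by omega)
  have h2 : ∑ e ∈ range T, b ^ e ≤ (b - 1) * ∑ e ∈ range T, b ^ e :=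
    Nat.le_mul_of_pos_left _ (by omega)
  omega

lemma sum_pow_lt {b : ℕ} (hb : 2 ≤ b) {S : Finset ℕ} {T : ℕ} (hS : S ⊆ range T) :
    ∑ e ∈ S, b ^ e < b ^ T :=
  lt_of_le_of_lt (Finset.sum_le_sum_of_subset hS) (geomNat_lt hb T)

lemma rev_lt {b : ℕ} (hb : 2 ≤ b) (T x : ℕ) : rev b T x < b ^ T := by
  have h1 : rev b T x ≤ ∑ j ∈ range T, (b - 1) * b ^ (T - 1 - j) := by
    apply Finset.sum_le_sum
    intro j _
    exact Nat.mul_le_mul_right _ (Nat.le_sub_one_of_lt (Nat.mod_lt _ (by omega)))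
  have h2 : ∑ j ∈ range T, (b - 1) * b ^ (T - 1 - j) = ∑ j ∈ range T, (b-1) * b ^ j := by
    rw [← Finset.sum_range_reflect]
    apply Finset.sum_congr rfl
    intro j hj
    simp only [Finset.mem_range] at hj
    congr 2
    omega
  have h3 := geomNat_mul hb T
  have h4 : 1 ≤ b ^ T := Nat.one_le_pow _ _ (by omega)
  rw [Finset.mul_sum] at h3
  omega

lemma digit_mod_pow {b T j n : ℕ} (hb : 2 ≤ b) (hj : j < T) :
    n % b ^ T / b ^ j % b = n / b ^ j % b := by
  have h : b ^ T = b ^ j * b ^ (T - j) := by rw [← pow_add]; congr 1; omega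
  rw [h, Nat.mod_mul_right_div_self]
  exact Nat.mod_mod_of_dvd _ (dvd_pow_self b (by omega))

/-- Splitting `rev` at position `T`. -/
lemma rev_split {b : ℕ} (hb : 2 ≤ b) (T U n : ℕ) :
    rev b (T + U) n = b ^ U * rev b T (n % b ^ T) + rev b U (n / b ^ T) := by
  unfold rev
  have hdisj : Disjoint (Finset.range T) ((Finset.range U).map (addLeftEmbedding T)) := by
    simp only [Finset.disjoint_left, Finset.mem_range, Finset.mem_map, addLeftEmbedding_apply]
    rintro a ha ⟨x, hx, rfl⟩
    omega
  rw [Finset.range_add, Finset.sum_union hdisj]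
  · congr 1
    · rw [Finset.mul_sum]
      apply Finset.sum_congr rfl
      intro j hj
      simp only [Finset.mem_range] at hj
      rw [digit_mod_pow hb hj]
      rw [← mul_assoc, mul_comm (b ^ U), mul_assoc, ← pow_add]
      congr 2
      omega
    · rw [Finset.sum_map]
      apply Finset.sum_congr rfl
      intro j hj
      simp only [Finset.mem_range] at hj
      simp only [Function.Embedding.coeFn_mk, addLeftEmbedding_apply]
      rw [Nat.div_div_eq_div_mul, ← pow_add]
      have h1 : T + U - 1 - (T + j) = U - 1 - j := by omega
      have h2 : T + j = j + T := by omega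
      rw [h1, h2]

lemma rev_one (b y : ℕ) : rev b 1 y = y % b := by
  simp [rev]

lemma rev_top {b : ℕ} (hb : 2 ≤ b) {T a r : ℕ} (ha : a < b) (hr : r < b ^ T) :
    rev b (T + 1) (a * b ^ T + r) = a + b * rev b T r := by
  have e1 : (a * b ^ T + r) % b ^ T = r := by
    rw [add_comm, Nat.add_mul_mod_self_right, Nat.mod_eq_of_lt hr]
  have e2 : (a * b ^ T + r) / b ^ T = a := by
    rw [add_comm, Nat.add_mul_div_right _ _ (Nat.pow_pos (n := T) (by omega : 0 < b)),
      Nat.div_eq_of_lt hr]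
    omega
  rw [rev_split hb T 1 (a * b ^ T + r), e1, e2, rev_one, Nat.mod_eq_of_lt ha, pow_one, add_comm]

lemma rev_bottom {b : ℕ} (hb : 2 ≤ b) (T x : ℕ) :
    rev b (T + 1) x = (x % b) * b ^ T + rev b T (x / b) := by
  rw [add_comm T 1, rev_split hb 1 T x, pow_one, rev_one,
    Nat.mod_mod_of_dvd x (dvd_refl b), mul_comm]

lemma rev_rev {b : ℕ} (hb : 2 ≤ b) {T x : ℕ} (hx : x < b ^ T) :
    rev b T (rev b T x) = x := by
  induction T generalizing x with
  | zero => simp_all [rev]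
  | succ T ih =>
    have hxb : x / b < b ^ T := by
      rw [Nat.div_lt_iff_lt_mul (by omega)]
      calc x < b ^ (T+1) := hx
        _ = b ^ T * b := pow_succ b T
    rw [rev_bottom hb T x,
      rev_top hb (Nat.mod_lt x (by omega)) (rev_lt hb T (x / b)),
      ih hxb, Nat.mod_add_div]

lemma rev_one_val {b : ℕ} (hb : 2 ≤ b) {U : ℕ} (hU : 1 ≤ U) : rev b U 1 = b ^ (U - 1) := by
  unfold rev
  rw [Finset.sum_eq_single 0]
  · simp [Nat.mod_eq_of_lt (show 1 < b by omega)]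
  · intro j hj hj0
    have : b ^ j > 1 := by
      calc 1 < b := by omega
        _ = b ^ 1 := (pow_one b).symm
        _ ≤ b ^ j := Nat.pow_le_pow_right (by omega) (by omega)
    simp [Nat.div_eq_of_lt this]
  · intro h
    simp [Finset.mem_range] at h
    omega

lemma rev_sum_pow {b : ℕ} (hb : 2 ≤ b) (S : Finset ℕ) :
    ∀ T, S ⊆ range T → rev b T (∑ e ∈ S, b ^ e) = ∑ e ∈ S, b ^ (T - 1 - e) := by
  induction S using Finset.induction_on_max with
  | empty => intro T _; simp [rev]
  | insert M S' hS' ih =>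
    intro T hsub
    have hMT : M < T := by
      have := hsub (Finset.mem_insert_self M S')
      simpa [Finset.mem_range] using this
    have hS'M : S' ⊆ range M := fun x hx => Finset.mem_range.mpr (hS' x hx)
    have hR : ∑ e ∈ S', b ^ e < b ^ M := sum_pow_lt hb hS'M
    have hMnot : M ∉ S' := fun h => lt_irrefl M (hS' M h)
    obtain ⟨u, rfl⟩ : ∃ u, T = M + u := ⟨T - M, by omega⟩
    have hu : 1 ≤ u := by omega
    rw [Finset.sum_insert hMnot, Finset.sum_insert hMnot,
      rev_split hb M u (b ^ M + ∑ e ∈ S', b ^ e)]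
    have e1 : (b ^ M + ∑ e ∈ S', b ^ e) % b ^ M = ∑ e ∈ S', b ^ e := by
      rw [add_comm, Nat.add_mod_right, Nat.mod_eq_of_lt hR]
    have e2 : (b ^ M + ∑ e ∈ S', b ^ e) / b ^ M = 1 := by
      rw [add_comm, Nat.add_div_right _ (Nat.pow_pos (n := M) (by omega : 0 < b)),
        Nat.div_eq_of_lt hR]
    rw [e1, e2, rev_one_val hb hu, ih M hS'M, Finset.mul_sum]
    have e3 : M + u - 1 - M = u - 1 := by omega
    rw [e3, add_comm (∑ e ∈ S', b ^ u * b ^ (M - 1 - e))]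
    congr 1
    apply Finset.sum_congr rfl
    intro e he
    rw [← pow_add]
    congr 1
    have := hS' e he
    omega

lemma radInv_eq_rev {b N n : ℕ} (hb : 2 ≤ b) (hn : n < b ^ N) :
    radInv b n = (rev b N n : ℝ) / (b : ℝ) ^ N := by
  have hbR : (0:ℝ) < b := by exact_mod_cast (by omega : 0 < b)
  have hzero : ∀ j ∉ Finset.range N, ((n / b ^ j % b : ℕ) : ℝ) / (b : ℝ) ^ (j + 1) = 0 := by
    intro j hj
    simp only [Finset.mem_range, not_lt] at hj
    have : n / b ^ j = 0 :=
      Nat.div_eq_of_lt (lt_of_lt_of_le hn (Nat.pow_le_pow_right (by omega) hj))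
    simp [this]
  rw [radInv, tsum_eq_sum hzero, rev]
  push_cast
  rw [Finset.sum_div]
  apply Finset.sum_congr rfl
  intro j hj
  simp only [Finset.mem_range] at hj
  have hsplit : (b:ℝ) ^ N = (b:ℝ) ^ (j + 1) * (b:ℝ) ^ (N - 1 - j) := by
    rw [← pow_add]; congr 1; omega
  have hne : (b:ℝ) ^ (N - 1 - j) ≠ 0 := by positivity
  rw [hsplit, mul_div_mul_right _ _ hne]

lemma Yp_eq_sum_image {b τ k : ℕ} (hτ : 1 ≤ τ) :
    ∑ l ∈ Finset.Icc 1 (k-1), b ^ (l * τ) =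
      ∑ e ∈ (Finset.Icc 1 (k-1)).image (· * τ), b ^ e := by
  rw [Finset.sum_image]
  intro x _ y _ h
  exact Nat.eq_of_mul_eq_mul_right (by omega) h

lemma Yp_lt {b τ k : ℕ} (hb : 2 ≤ b) (hτ : 1 ≤ τ) (hk : 1 ≤ k) :
    ∑ l ∈ Finset.Icc 1 (k-1), b ^ (l * τ) < b ^ (τ * k) := by
  rw [Yp_eq_sum_image hτ]
  apply sum_pow_lt hb
  intro e he
  simp only [Finset.mem_image, Finset.mem_Icc] at he
  obtain ⟨l, ⟨hl1, hl2⟩, rfl⟩ := he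
  simp only [Finset.mem_range]
  calc l * τ ≤ (k-1) * τ := Nat.mul_le_mul_right _ hl2
    _ < k * τ := by
        have : 0 < τ := hτ
        have : k - 1 < k := by omega
        exact (Nat.mul_lt_mul_right hτ).mpr (by omega)
    _ = τ * k := Nat.mul_comm _ _

lemma rev_Yp {b τ k : ℕ} (hb : 2 ≤ b) (hτ : 1 ≤ τ) (hk : 1 ≤ k) :
    rev b (τ * k) (∑ l ∈ Finset.Icc 1 (k-1), b ^ (l * τ)) =
      ∑ j ∈ Finset.Icc 1 (k-1), b ^ (j * τ - 1) := by
  rw [Yp_eq_sum_image hτ, rev_sum_pow hb _ (τ * k) (by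
    intro e he
    simp only [Finset.mem_image, Finset.mem_Icc] at he
    obtain ⟨l, ⟨hl1, hl2⟩, rfl⟩ := he
    simp only [Finset.mem_range]
    calc l * τ ≤ (k-1) * τ := Nat.mul_le_mul_right _ hl2
      _ < k * τ := (Nat.mul_lt_mul_right hτ).mpr (by omega)
      _ = τ * k := Nat.mul_comm _ _), Finset.sum_image (by
    intro x _ y _ h
    exact Nat.eq_of_mul_eq_mul_right (by omega) h)]
  refine Finset.sum_nbij' (fun l => k - l) (fun j => k - j) ?_ ?_ ?_ ?_ ?_ <;>
      intro a ha <;> simp only [Finset.mem_Icc] at ha ⊢ <;>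
    first
      | omega
      | (congr 1
         have h1 : (k - a) * τ = k * τ - a * τ := Nat.sub_mul k a τ
         have h2 : τ * k = k * τ := Nat.mul_comm _ _
         have h3 : (a + 1) * τ ≤ k * τ := Nat.mul_le_mul_right τ (by omega)
         have h4 : (a + 1) * τ = a * τ + τ := by ring
         omega)

lemma coord_iff {b τ k : ℕ} (n : ℕ) (hb : 2 ≤ b) (hτ : 1 ≤ τ) (hk : 1 ≤ k) :
    (radInv b n ∈ Set.Ico
      ((∑ j ∈ Finset.Icc 1 k, ((b:ℝ) ^ (j * τ))⁻¹) - ((b:ℝ) ^ (τ * k))⁻¹)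
      (∑ j ∈ Finset.Icc 1 k, ((b:ℝ) ^ (j * τ))⁻¹)) ↔
    n % b ^ (τ * k) = ∑ j ∈ Finset.Icc 1 (k - 1), b ^ (j * τ - 1) := by
  set T := τ * k with hT
  have hbR : (1:ℝ) < (b:ℝ) := by exact_mod_cast (by omega : 1 < b)
  have hbT : (0:ℝ) < (b:ℝ) ^ T := by positivity
  have hnN : n < b ^ (T + n) := by
    calc n < 2 ^ n := Nat.lt_two_pow_self
      _ ≤ b ^ n := Nat.pow_le_pow_left hb n
      _ ≤ b ^ (T + n) := Nat.pow_le_pow_right (by omega) (by omega)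
  have key : radInv b n =
      ((rev b T (n % b ^ T) : ℝ) + (rev b n (n / b ^ T) : ℝ) / (b:ℝ) ^ n) / (b:ℝ) ^ T := by
    rw [radInv_eq_rev hb hnN, rev_split hb T n n]
    push_cast
    rw [pow_add]
    field_simp
  set r := rev b T (n % b ^ T) with hr
  set ρ := rev b n (n / b ^ T) with hρ
  have hρ1 : (0:ℝ) ≤ (ρ:ℝ) / (b:ℝ) ^ n := by positivity
  have hρ2 : (ρ:ℝ) / (b:ℝ) ^ n < 1 := by
    rw [div_lt_one (by positivity)]
    exact_mod_cast rev_lt hb n (n / b ^ T)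
  set Y' := ∑ l ∈ Finset.Icc 1 (k-1), b ^ (l * τ) with hY'
  -- the right endpoint equals (Y' + 1)/b^T
  have hy : (∑ j ∈ Finset.Icc 1 k, ((b:ℝ) ^ (j * τ))⁻¹) = ((Y':ℝ) + 1) / (b:ℝ) ^ T := by
    have step1 : ∀ j ∈ Finset.Icc 1 k, ((b:ℝ) ^ (j * τ))⁻¹ = (b:ℝ) ^ ((k - j) * τ) / (b:ℝ) ^ T := by
      intro j hj
      simp only [Finset.mem_Icc] at hj
      have hexp : T = j * τ + (k - j) * τ := by
        have h1 : (k - j) * τ = k * τ - j * τ := Nat.sub_mul k j τ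
        have h2 : j * τ ≤ k * τ := Nat.mul_le_mul_right τ hj.2
        have h3 : τ * k = k * τ := Nat.mul_comm _ _
        omega
      rw [hexp, pow_add]
      have hne1 : ((b:ℝ) ^ (j * τ)) ≠ 0 := by positivity
      have hne2 : ((b:ℝ) ^ ((k - j) * τ)) ≠ 0 := by positivity
      field_simp
    rw [Finset.sum_congr rfl step1, ← Finset.sum_div]
    congr 1
    have hsplit : Finset.Icc 1 k = insert k (Finset.Icc 1 (k-1)) := by
      ext x
      simp only [Finset.mem_Icc, Finset.mem_insert]
      omega
    rw [hsplit, Finset.sum_insert (by simp only [Finset.mem_Icc]; omega)]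
    rw [Nat.sub_self, Nat.zero_mul, pow_zero]
    rw [add_comm]
    congr 1
    have hnat : ∑ j ∈ Finset.Icc 1 (k-1), b ^ ((k - j) * τ) = Y' := by
      rw [hY']
      refine Finset.sum_nbij' (fun j => k - j) (fun l => k - l) ?_ ?_ ?_ ?_ ?_ <;>
          intro a ha <;> simp only [Finset.mem_Icc] at ha ⊢ <;>
        first | omega | (congr 2; omega)
    rw [← hnat]
    push_cast
    rfl
  have hYlt : Y' < b ^ T := Yp_lt hb hτ hk
  have hmod : n % b ^ T < b ^ T := Nat.mod_lt _ (Nat.pow_pos (n := T) (by omega : 0 < b))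
  have hrevY : rev b T Y' = ∑ j ∈ Finset.Icc 1 (k-1), b ^ (j * τ - 1) := rev_Yp hb hτ hk
  have hiff2 : r = Y' ↔ n % b ^ T = ∑ j ∈ Finset.Icc 1 (k-1), b ^ (j * τ - 1) := by
    constructor
    · intro h
      rw [← hrevY, ← h, hr, rev_rev hb hmod]
    · intro h
      rw [hr, h, ← hrevY, rev_rev hb hYlt]
  rw [← hiff2]
  have hlo : ((Y':ℝ)+1)/(b:ℝ)^T - ((b:ℝ)^T)⁻¹ = (Y':ℝ)/(b:ℝ)^T := by
    rw [inv_eq_one_div]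
    ring
  rw [Set.mem_Ico, key, hy, hlo, div_le_div_iff_of_pos_right hbT, div_lt_div_iff_of_pos_right hbT]
  constructor
  · rintro ⟨h1, h2⟩
    have hc1 : (r:ℝ) < (Y':ℝ) + 1 := lt_of_le_of_lt (le_add_of_nonneg_right hρ1) h2
    have hc2 : (Y':ℝ) < (r:ℝ) + 1 := lt_of_le_of_lt h1 (by linarith)
    have hd1 : r < Y' + 1 := by exact_mod_cast hc1
    have hd2 : Y' < r + 1 := by exact_mod_cast hc2
    omega
  · intro h
    rw [h]
    constructor
    · linarith
    · linarith

/-- `H_s(n) ∈ P_k` iff `n ≡ ỹ_m + A_k (mod B_{τ·k})`. -/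
theorem halton_mem_Pk_iff_ytilde (s m : ℕ) (hs : 1 ≤ s) (b : Fin s → ℕ) (hb : ∀ i, 2 ≤ b i)
    (hcop : ∀ i j, i ≠ j → Nat.Coprime (b i) (b j))
    (τ : Fin s → ℕ)
    (hτ : ∀ i, τ i = sInf {l : ℕ | 1 ≤ l ∧ l < (∏ j ∈ Finset.univ.erase i, b j) ∧
      b i ^ l % (∏ j ∈ Finset.univ.erase i, b j) = 1})
    (hτpos : ∀ i, 1 ≤ τ i)
    (k : Fin s → ℕ) (hk : ∀ i, 1 ≤ k i ∧ k i ≤ m)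
    (M : Fin s → ℤ)
    (hM : ∀ i, M i * ∏ j ∈ Finset.univ.erase i, (b j : ℤ) ^ (τ j * k j) ≡ 1
      [ZMOD ((b i : ℤ) ^ (τ i * k i))])
    (A : ℕ) (hA : A < ∏ i, b i ^ (τ i * k i))
    (hA2 : (A : ℤ) ≡ -∑ i, M i * ((b i : ℤ) ^ (τ i * k i - 1) *
        ∏ j ∈ Finset.univ.erase i, (b j : ℤ) ^ (τ j * k j))
      [ZMOD (∏ i, (b i : ℤ) ^ (τ i * k i))])
    (M' : Fin s → ℤ)
    (hM' : ∀ i, M' i * ∏ j ∈ Finset.univ.erase i, (b j : ℤ) ^ (τ j * (m + 1)) ≡ 1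
      [ZMOD ((b i : ℤ) ^ (τ i * (m + 1)))])
    (ytil : ℕ) (hy : ytil < ∏ i, b i ^ (τ i * (m + 1)))
    (hy2 : (ytil : ℤ) ≡ ∑ i, M' i * (∏ j ∈ Finset.univ.erase i, (b j : ℤ) ^ (τ j * (m + 1))) *
        (∑ j ∈ Finset.Icc 1 (m + 1), (b i : ℤ) ^ (j * τ i - 1))
      [ZMOD (∏ i, (b i : ℤ) ^ (τ i * (m + 1)))])
    (n : ℕ) :
    (∀ i, radInv (b i) n ∈
        Set.Ico ((∑ j ∈ Finset.Icc 1 (k i), ((b i : ℝ) ^ (j * τ i))⁻¹)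
            - ((b i : ℝ) ^ (τ i * k i))⁻¹)
          (∑ j ∈ Finset.Icc 1 (k i), ((b i : ℝ) ^ (j * τ i))⁻¹)) ↔
      (n : ℤ) ≡ (ytil : ℤ) + (A : ℤ) [ZMOD (∏ i, (b i : ℤ) ^ (τ i * k i))] := by
  classical
  have hQ : ∀ i, (0:ℤ) < (b i:ℤ) ^ (τ i * k i) := fun i =>
    pow_pos (by exact_mod_cast (by have := hb i; omega : 0 < b i)) _
  set c : Fin s → ℕ := fun i => ∑ j ∈ Finset.Icc 1 (k i - 1), (b i) ^ (j * τ i - 1) with hc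
  -- Step B1 : A ≡ -(b i)^(τ i * k i - 1) mod (b i)^(τ i * k i)
  have hB1 : ∀ i, (A:ℤ) ≡ -((b i:ℤ) ^ (τ i * k i - 1)) [ZMOD (b i:ℤ) ^ (τ i * k i)] := by
    intro i
    have h1 : (A:ℤ) ≡ -∑ i', M i' * ((b i':ℤ) ^ (τ i' * k i' - 1) *
        ∏ j ∈ Finset.univ.erase i', (b j:ℤ) ^ (τ j * k j)) [ZMOD (b i:ℤ) ^ (τ i * k i)] :=
      hA2.of_dvd (Finset.dvd_prod_of_mem (fun i' => (b i':ℤ) ^ (τ i' * k i')) (Finset.mem_univ i))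
    have hsum : ∑ i', M i' * ((b i':ℤ) ^ (τ i' * k i' - 1) *
        ∏ j ∈ Finset.univ.erase i', (b j:ℤ) ^ (τ j * k j)) ≡
        M i * ((b i:ℤ) ^ (τ i * k i - 1) *
        ∏ j ∈ Finset.univ.erase i, (b j:ℤ) ^ (τ j * k j)) [ZMOD (b i:ℤ) ^ (τ i * k i)] := by
      rw [← Finset.add_sum_erase _ _ (Finset.mem_univ i)]
      have hdvd : ((b i:ℤ) ^ (τ i * k i)) ∣ ∑ i' ∈ Finset.univ.erase i,
          M i' * ((b i':ℤ) ^ (τ i' * k i' - 1) *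
          ∏ j ∈ Finset.univ.erase i', (b j:ℤ) ^ (τ j * k j)) := by
        apply Finset.dvd_sum
        intro i' hi'
        have hne : i ≠ i' := fun h => (Finset.mem_erase.mp hi').1 h.symm
        have hmem : i ∈ Finset.univ.erase i' := Finset.mem_erase.mpr ⟨hne, Finset.mem_univ i⟩
        exact Dvd.dvd.mul_left (Dvd.dvd.mul_left
          (Finset.dvd_prod_of_mem _ hmem) _) _
      calc M i * ((b i:ℤ) ^ (τ i * k i - 1) * ∏ j ∈ Finset.univ.erase i, (b j:ℤ) ^ (τ j * k j))
            + ∑ i' ∈ Finset.univ.erase i, M i' * ((b i':ℤ) ^ (τ i' * k i' - 1) *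
              ∏ j ∈ Finset.univ.erase i', (b j:ℤ) ^ (τ j * k j))
          ≡ M i * ((b i:ℤ) ^ (τ i * k i - 1) * ∏ j ∈ Finset.univ.erase i, (b j:ℤ) ^ (τ j * k j))
            + 0 [ZMOD (b i:ℤ) ^ (τ i * k i)] :=
            Int.ModEq.add_left _ (Int.modEq_zero_iff_dvd.mpr hdvd)
        _ = _ := by ring
    have hterm : M i * ((b i:ℤ) ^ (τ i * k i - 1) *
        ∏ j ∈ Finset.univ.erase i, (b j:ℤ) ^ (τ j * k j)) ≡
        (b i:ℤ) ^ (τ i * k i - 1) [ZMOD (b i:ℤ) ^ (τ i * k i)] := by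
      have e1 : M i * ((b i:ℤ) ^ (τ i * k i - 1) *
          ∏ j ∈ Finset.univ.erase i, (b j:ℤ) ^ (τ j * k j)) =
          (b i:ℤ) ^ (τ i * k i - 1) *
          (M i * ∏ j ∈ Finset.univ.erase i, (b j:ℤ) ^ (τ j * k j)) := by ring
      calc M i * ((b i:ℤ) ^ (τ i * k i - 1) *
            ∏ j ∈ Finset.univ.erase i, (b j:ℤ) ^ (τ j * k j))
          = (b i:ℤ) ^ (τ i * k i - 1) *
            (M i * ∏ j ∈ Finset.univ.erase i, (b j:ℤ) ^ (τ j * k j)) := e1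
        _ ≡ (b i:ℤ) ^ (τ i * k i - 1) * 1 [ZMOD (b i:ℤ) ^ (τ i * k i)] :=
            Int.ModEq.mul_left _ (hM i)
        _ = (b i:ℤ) ^ (τ i * k i - 1) := mul_one _
    exact h1.trans (Int.ModEq.neg (hsum.trans hterm))
  -- Step B2 : ytil ≡ ∑_{j=1}^{k i} (b i)^(j τ i - 1) mod (b i)^(τ i * k i)
  have hB2 : ∀ i, (ytil:ℤ) ≡ ∑ j ∈ Finset.Icc 1 (k i), (b i:ℤ) ^ (j * τ i - 1)
      [ZMOD (b i:ℤ) ^ (τ i * k i)] := by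
    intro i
    have hqd : ((b i:ℤ) ^ (τ i * k i)) ∣ (b i:ℤ) ^ (τ i * (m + 1)) :=
      pow_dvd_pow _ (Nat.mul_le_mul_left _ (by have := (hk i).2; omega))
    have hqD : ((b i:ℤ) ^ (τ i * k i)) ∣ ∏ i', (b i':ℤ) ^ (τ i' * (m + 1)) :=
      hqd.trans (Finset.dvd_prod_of_mem (fun i' => (b i':ℤ) ^ (τ i' * (m + 1))) (Finset.mem_univ i))
    have h1 : (ytil:ℤ) ≡ ∑ i', M' i' *
        (∏ j ∈ Finset.univ.erase i', (b j:ℤ) ^ (τ j * (m + 1))) *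
        (∑ j ∈ Finset.Icc 1 (m + 1), (b i':ℤ) ^ (j * τ i' - 1))
        [ZMOD (b i:ℤ) ^ (τ i * k i)] := hy2.of_dvd hqD
    have hsum : ∑ i', M' i' *
        (∏ j ∈ Finset.univ.erase i', (b j:ℤ) ^ (τ j * (m + 1))) *
        (∑ j ∈ Finset.Icc 1 (m + 1), (b i':ℤ) ^ (j * τ i' - 1)) ≡
        M' i * (∏ j ∈ Finset.univ.erase i, (b j:ℤ) ^ (τ j * (m + 1))) *
        (∑ j ∈ Finset.Icc 1 (m + 1), (b i:ℤ) ^ (j * τ i - 1))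
        [ZMOD (b i:ℤ) ^ (τ i * k i)] := by
      rw [← Finset.add_sum_erase _ _ (Finset.mem_univ i)]
      have hdvd : ((b i:ℤ) ^ (τ i * k i)) ∣ ∑ i' ∈ Finset.univ.erase i, M' i' *
          (∏ j ∈ Finset.univ.erase i', (b j:ℤ) ^ (τ j * (m + 1))) *
          (∑ j ∈ Finset.Icc 1 (m + 1), (b i':ℤ) ^ (j * τ i' - 1)) := by
        apply Finset.dvd_sum
        intro i' hi'
        have hne : i ≠ i' := fun h => (Finset.mem_erase.mp hi').1 h.symm
        have hmem : i ∈ Finset.univ.erase i' := Finset.mem_erase.mpr ⟨hne, Finset.mem_univ i⟩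
        have h2 : ((b i:ℤ) ^ (τ i * k i)) ∣
            ∏ j ∈ Finset.univ.erase i', (b j:ℤ) ^ (τ j * (m + 1)) :=
          hqd.trans (Finset.dvd_prod_of_mem _ hmem)
        exact Dvd.dvd.mul_right (Dvd.dvd.mul_left h2 _) _
      calc M' i * (∏ j ∈ Finset.univ.erase i, (b j:ℤ) ^ (τ j * (m + 1))) *
            (∑ j ∈ Finset.Icc 1 (m + 1), (b i:ℤ) ^ (j * τ i - 1))
            + ∑ i' ∈ Finset.univ.erase i, M' i' *
              (∏ j ∈ Finset.univ.erase i', (b j:ℤ) ^ (τ j * (m + 1))) *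
              (∑ j ∈ Finset.Icc 1 (m + 1), (b i':ℤ) ^ (j * τ i' - 1))
          ≡ M' i * (∏ j ∈ Finset.univ.erase i, (b j:ℤ) ^ (τ j * (m + 1))) *
              (∑ j ∈ Finset.Icc 1 (m + 1), (b i:ℤ) ^ (j * τ i - 1)) + 0
            [ZMOD (b i:ℤ) ^ (τ i * k i)] :=
            Int.ModEq.add_left _ (Int.modEq_zero_iff_dvd.mpr hdvd)
        _ = _ := by ring
    have hterm : M' i * (∏ j ∈ Finset.univ.erase i, (b j:ℤ) ^ (τ j * (m + 1))) *
        (∑ j ∈ Finset.Icc 1 (m + 1), (b i:ℤ) ^ (j * τ i - 1)) ≡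
        ∑ j ∈ Finset.Icc 1 (m + 1), (b i:ℤ) ^ (j * τ i - 1)
        [ZMOD (b i:ℤ) ^ (τ i * k i)] := by
      have := ((hM' i).of_dvd hqd).mul_right (∑ j ∈ Finset.Icc 1 (m + 1), (b i:ℤ) ^ (j * τ i - 1))
      rw [one_mul] at this
      exact this
    have htail : ∑ j ∈ Finset.Icc 1 (m + 1), (b i:ℤ) ^ (j * τ i - 1) ≡
        ∑ j ∈ Finset.Icc 1 (k i), (b i:ℤ) ^ (j * τ i - 1)
        [ZMOD (b i:ℤ) ^ (τ i * k i)] := by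
      have hsplit : Finset.Icc 1 (m + 1) =
          Finset.Icc 1 (k i) ∪ Finset.Icc (k i + 1) (m + 1) := by
        ext x
        simp only [Finset.mem_Icc, Finset.mem_union]
        have := (hk i).1
        have := (hk i).2
        omega
      have hdisj : Disjoint (Finset.Icc 1 (k i)) (Finset.Icc (k i + 1) (m + 1)) := by
        simp only [Finset.disjoint_left, Finset.mem_Icc]
        omega
      rw [hsplit, Finset.sum_union hdisj]
      have hdvd : ((b i:ℤ) ^ (τ i * k i)) ∣
          ∑ j ∈ Finset.Icc (k i + 1) (m + 1), (b i:ℤ) ^ (j * τ i - 1) := by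
        apply Finset.dvd_sum
        intro j hj
        simp only [Finset.mem_Icc] at hj
        apply pow_dvd_pow
        have h1 : (k i + 1) * τ i ≤ j * τ i := Nat.mul_le_mul_right _ hj.1
        have h2 : (k i + 1) * τ i = k i * τ i + τ i := by ring
        have h3 : τ i * k i = k i * τ i := Nat.mul_comm _ _
        have := hτpos i
        omega
      calc ∑ j ∈ Finset.Icc 1 (k i), (b i:ℤ) ^ (j * τ i - 1)
            + ∑ j ∈ Finset.Icc (k i + 1) (m + 1), (b i:ℤ) ^ (j * τ i - 1)
          ≡ ∑ j ∈ Finset.Icc 1 (k i), (b i:ℤ) ^ (j * τ i - 1) + 0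
            [ZMOD (b i:ℤ) ^ (τ i * k i)] :=
            Int.ModEq.add_left _ (Int.modEq_zero_iff_dvd.mpr hdvd)
        _ = _ := by ring
    exact h1.trans ((hsum.trans hterm).trans htail)
  -- Step B3 : ytil + A ≡ c i
  have hB3 : ∀ i, (ytil:ℤ) + (A:ℤ) ≡ (c i : ℤ) [ZMOD (b i:ℤ) ^ (τ i * k i)] := by
    intro i
    have h1 := (hB2 i).add (hB1 i)
    have h2 : ∑ j ∈ Finset.Icc 1 (k i), (b i:ℤ) ^ (j * τ i - 1)
        + -((b i:ℤ) ^ (τ i * k i - 1)) = (c i : ℤ) := by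
      have hki : k i = (k i - 1) + 1 := by have := (hk i).1; omega
      have hsplit : ∑ j ∈ Finset.Icc 1 (k i), (b i:ℤ) ^ (j * τ i - 1) =
          ∑ j ∈ Finset.Icc 1 (k i - 1), (b i:ℤ) ^ (j * τ i - 1)
          + (b i:ℤ) ^ (k i * τ i - 1) := by
        conv_lhs => rw [hki]
        rw [Finset.sum_Icc_succ_top (by omega)]
        rw [← hki]
      have e1 : τ i * k i - 1 = k i * τ i - 1 := by rw [Nat.mul_comm]
      rw [hsplit, e1]
      simp only [hc]
      push_cast
      ring
    rw [← h2]
    exact h1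
  -- c i < (b i)^(τ i * k i)
  have hclt : ∀ i, c i < (b i) ^ (τ i * k i) := by
    intro i
    have h := rev_lt (hb i) (τ i * k i) (∑ l ∈ Finset.Icc 1 (k i - 1), (b i) ^ (l * τ i))
    rw [rev_Yp (hb i) (hτpos i) (hk i).1] at h
    exact h
  have hcast : ∀ i, ((b i ^ (τ i * k i) : ℕ) : ℤ) = (b i:ℤ) ^ (τ i * k i) := by
    intro i; push_cast; rfl
  have hmodnat : ∀ i, (n % (b i) ^ (τ i * k i) = c i ↔
      (n:ℤ) ≡ (c i : ℤ) [ZMOD ((b i:ℤ) ^ (τ i * k i))]) := by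
    intro i
    rw [← hcast i]
    rw [Int.natCast_modEq_iff]
    unfold Nat.ModEq
    rw [Nat.mod_eq_of_lt (hclt i)]
  constructor
  · intro h
    rw [Int.ModEq]
    have hdvd : (∏ i, (b i:ℤ) ^ (τ i * k i)) ∣ ((ytil:ℤ) + (A:ℤ) - (n:ℤ)) := by
      apply Finset.prod_dvd_of_coprime
      · intro i _ j _ hij
        have hc1 : IsCoprime ((b i:ℤ)) ((b j:ℤ)) :=
          Nat.isCoprime_iff_coprime.mpr (hcop i j hij)
        exact (hc1.pow : IsCoprime _ _)
      · intro i _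
        have h1 : (n:ℤ) ≡ (c i : ℤ) [ZMOD ((b i:ℤ) ^ (τ i * k i))] :=
          (hmodnat i).mp ((coord_iff n (hb i) (hτpos i) (hk i).1).mp (h i))
        have h3 : (n:ℤ) ≡ (ytil:ℤ) + (A:ℤ) [ZMOD ((b i:ℤ) ^ (τ i * k i))] :=
          h1.trans (hB3 i).symm
        exact Int.ModEq.dvd h3
    exact (Int.modEq_iff_dvd.mpr hdvd)
  · intro h i
    have h1 : (n:ℤ) ≡ (ytil:ℤ) + (A:ℤ) [ZMOD ((b i:ℤ) ^ (τ i * k i))] :=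
      h.of_dvd (Finset.dvd_prod_of_mem (fun i' => (b i':ℤ) ^ (τ i' * k i')) (Finset.mem_univ i))
    have h2 : (n:ℤ) ≡ (c i : ℤ) [ZMOD ((b i:ℤ) ^ (τ i * k i))] := h1.trans (hB3 i)
    exact (coord_iff n (hb i) (hτpos i) (hk i).1).mpr ((hmodnat i).mpr h2)
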